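/- Let a > 1. As z → ∞ the three branches of the Pastur cubic satisfy ξ₁(z) = z − 1/z + O(1/z³), ξ₂(z) = a + 1/(2z) + O(1/z²), and ξ₃(z) = −a + 1/(2z) + O(1/z²). -/

import Mathlib

open MeasureTheory Filter Topology Polynomial Asymptotics

noncomputable section

/-- `√(1+8a²)` -/
def s8 (a : ℝ) : ℝ := Real.sqrt (1 + 8 * a ^ 2)

/-- the critical point `p` -/
def pBr (a : ℝ) : ℝ := Real.sqrt (1 / 2 + a ^ 2 - s8 a / 2)

/-- the critical point `q` -/
def qBr (a : ℝ) : ℝ := Real.sqrt (1 / 2 + a ^ 2 + s8 a / 2)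

/-- the right edge point `z₁` -/
def z1 (a : ℝ) : ℝ := qBr a * (s8 a + 3) / (s8 a + 1)

/-- the left edge point `z₂` of the right interval -/
def z2 (a : ℝ) : ℝ := pBr a * (s8 a - 3) / (s8 a - 1)

open scoped Classical in
/-- the Pastur density: `(1/π)|Im ξ|` for a non-real root `ξ` of the Pastur cubic, `0` else. -/
def pasturRho (a x : ℝ) : ℝ :=
  if h : ∃ ξ : ℂ, ξ ^ 3 - (x : ℂ) * ξ ^ 2 - ((a : ℂ) ^ 2 - 1) * ξ + (x : ℂ) * (a : ℂ) ^ 2 = 0 ∧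
      ξ.im ≠ 0
  then |h.choose.im| / Real.pi
  else 0

/-- the cut `[z₂, z₁]` viewed in `ℂ` -/
def cutR (a : ℝ) : Set ℂ := {z | z.im = 0 ∧ z2 a ≤ z.re ∧ z.re ≤ z1 a}

/-- the cut `[-z₁, -z₂]` viewed in `ℂ` -/
def cutL (a : ℝ) : Set ℂ := {z | z.im = 0 ∧ -z1 a ≤ z.re ∧ z.re ≤ -z2 a}

/-- `ℂ ∖ ([-z₁,-z₂] ∪ [z₂,z₁])` -/
def Omega1 (a : ℝ) : Set ℂ := (cutL a ∪ cutR a)ᶜ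

/-- `ℂ ∖ [z₂,z₁]` -/
def Omega2 (a : ℝ) : Set ℂ := (cutR a)ᶜ

/-- `ℂ ∖ [-z₁,-z₂]` -/
def Omega3 (a : ℝ) : Set ℂ := (cutL a)ᶜ

/-- the Pastur cubic at `z`, evaluated at `ξ` -/
def pasturCubic (a : ℝ) (z ξ : ℂ) : ℂ :=
  ξ ^ 3 - z * ξ ^ 2 - ((a : ℂ) ^ 2 - 1) * ξ + z * (a : ℂ) ^ 2

/-- `ξ` is the branch `ξ₁`: holomorphic on `Ω₁`, solves the Pastur cubic,
and `ξ₁(z) - z → 0` as `z → ∞`. -/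
def IsXi1 (a : ℝ) (ξ : ℂ → ℂ) : Prop :=
  DifferentiableOn ℂ ξ (Omega1 a) ∧
  (∀ z ∈ Omega1 a, pasturCubic a z (ξ z) = 0) ∧
  Tendsto (fun z : ℂ => ξ z - z) (Bornology.cobounded ℂ) (𝓝 0)

/-- `ξ` is the branch `ξ₂`: holomorphic on `Ω₂`, solves the Pastur cubic,
and `ξ₂(z) → a` as `z → ∞`. -/
def IsXi2 (a : ℝ) (ξ : ℂ → ℂ) : Prop :=
  DifferentiableOn ℂ ξ (Omega2 a) ∧
  (∀ z ∈ Omega2 a, pasturCubic a z (ξ z) = 0) ∧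
  Tendsto ξ (Bornology.cobounded ℂ) (𝓝 (a : ℂ))

/-- `ξ` is the branch `ξ₃`: holomorphic on `Ω₃`, solves the Pastur cubic,
and `ξ₃(z) → -a` as `z → ∞`. -/
def IsXi3 (a : ℝ) (ξ : ℂ → ℂ) : Prop :=
  DifferentiableOn ℂ ξ (Omega3 a) ∧
  (∀ z ∈ Omega3 a, pasturCubic a z (ξ z) = 0) ∧
  Tendsto ξ (Bornology.cobounded ℂ) (𝓝 (-(a : ℂ)))

/-- If `f(z)·zⁿ` tends to a finite limit at `∞`, then `f = O(1/zⁿ)`. -/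
lemma tendsto_mul_pow_isBigO_inv_pow (f : ℂ → ℂ) (n : ℕ) (c : ℂ)
    (h : Tendsto (fun z => f z * z ^ n) (Bornology.cobounded ℂ) (𝓝 c)) :
    f =O[Bornology.cobounded ℂ] fun z : ℂ => 1 / z ^ n := by
  have hz0 : ∀ᶠ z : ℂ in Bornology.cobounded ℂ, z ≠ 0 := by
    filter_upwards [tendsto_norm_cobounded_atTop.eventually (eventually_gt_atTop 0)] with z hz
    intro h0; rw [h0] at hz; simp at hz
  have h1 : (fun z => f z * z ^ n) =O[Bornology.cobounded ℂ] (fun _ => (1 : ℂ)) :=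
    h.isBigO_one ℂ
  have h2 := h1.mul (isBigO_refl (fun z : ℂ => 1 / z ^ n) (Bornology.cobounded ℂ))
  refine EventuallyEq.trans_isBigO ?_ (by simpa using h2)
  filter_upwards [hz0] with z h0
  field_simp

/-- the algebraic identity behind the `ξ₂` asymptotics -/
lemma alg2 (a z w : ℂ) (hC : (z - w) * (w ^ 2 - a ^ 2) = w)
    (hz : z ≠ 0) (hzw : z - w ≠ 0) (hw : w + a ≠ 0) :
    (w - (a + 1 / (2 * z))) * z ^ 2
      = w * (1 - z⁻¹ * w)⁻¹ * ((1 - z⁻¹ * w)⁻¹ + (w + a) ^ 2) / (2 * (w + a) ^ 2) := by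
  have h2 : (1 - z⁻¹ * w) = (z - w) / z := by field_simp
  rw [h2]
  field_simp
  linear_combination (2 * z * (z - w) * (w + a) + z) * hC

/-- the algebraic identity behind the `ξ₃` asymptotics -/
lemma alg3 (a z w : ℂ) (hC : (z - w) * (w ^ 2 - a ^ 2) = w)
    (hz : z ≠ 0) (hzw : z - w ≠ 0) (hw : w - a ≠ 0) :
    (w - (-a + 1 / (2 * z))) * z ^ 2
      = w * (1 - z⁻¹ * w)⁻¹ * ((1 - z⁻¹ * w)⁻¹ + (w - a) ^ 2) / (2 * (w - a) ^ 2) := by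
  have h2 : (1 - z⁻¹ * w) = (z - w) / z := by field_simp
  rw [h2]
  field_simp
  linear_combination (2 * z * (z - w) * (w - a) + z) * hC

/-- the algebraic identity behind the `ξ₁` asymptotics -/
lemma alg1 (a z w : ℂ) (hC : (z - w) * (w ^ 2 - a ^ 2) = w) (hz : z ≠ 0)
    (hwa : w ^ 2 - a ^ 2 ≠ 0) :
    (w - (z - 1 / z)) * z ^ 3
      = ((1 + z⁻¹ * (w - z)) ^ 2 - (z⁻¹) ^ 2 * a ^ 2)⁻¹ *
        ((w - z) ^ 2 - (1 + z⁻¹ * (w - z)) * ((1 + z⁻¹ * (w - z)) ^ 2 - (z⁻¹) ^ 2 * a ^ 2)⁻¹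
          - a ^ 2) := by
  have h2 : ((1 + z⁻¹ * (w - z)) ^ 2 - (z⁻¹) ^ 2 * a ^ 2) = (w ^ 2 - a ^ 2) / z ^ 2 := by
    field_simp
    ring
  rw [h2]
  field_simp
  linear_combination (-(z * (w ^ 2 - a ^ 2) + z)) * hC

/-- As `z → ∞`, `ξ₁(z) = z - 1/z + O(1/z³)`,
`ξ₂(z) = a + 1/(2z) + O(1/z²)` and `ξ₃(z) = -a + 1/(2z) + O(1/z²)`. -/
theorem statement10 (a : ℝ) (ha : 1 < a) (ξ₁ ξ₂ ξ₃ : ℂ → ℂ)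
    (hξ₁ : IsXi1 a ξ₁) (hξ₂ : IsXi2 a ξ₂) (hξ₃ : IsXi3 a ξ₃) :
    ((fun z : ℂ => ξ₁ z - (z - 1 / z)) =O[Bornology.cobounded ℂ] fun z : ℂ => 1 / z ^ 3) ∧
    ((fun z : ℂ => ξ₂ z - ((a : ℂ) + 1 / (2 * z))) =O[Bornology.cobounded ℂ]
      fun z : ℂ => 1 / z ^ 2) ∧
    ((fun z : ℂ => ξ₃ z - (-(a : ℂ) + 1 / (2 * z))) =O[Bornology.cobounded ℂ]
      fun z : ℂ => 1 / z ^ 2) := by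
  obtain ⟨-, hsol1, hlim1⟩ := hξ₁
  obtain ⟨-, hsol2, hlim2⟩ := hξ₂
  obtain ⟨-, hsol3, hlim3⟩ := hξ₃
  set l := Bornology.cobounded ℂ with hl
  have hz0 : ∀ᶠ z : ℂ in l, z ≠ 0 := by
    filter_upwards [tendsto_norm_cobounded_atTop.eventually (eventually_gt_atTop 0)] with z hz
    intro h0; rw [h0] at hz; simp at hz
  -- eventually outside the cuts
  have hcut : ∀ᶠ z : ℂ in l, z ∉ cutL a ∧ z ∉ cutR a := by
    filter_upwards [tendsto_norm_cobounded_atTop.eventually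
      (eventually_gt_atTop (|z1 a| + |z2 a|))] with z hz
    have hb := Complex.norm_le_abs_re_add_abs_im z
    constructor
    · rintro ⟨him, h1, h2⟩
      rw [him] at hb
      simp only [abs_zero, add_zero] at hb
      have : |z.re| ≤ |z1 a| + |z2 a| := by
        rw [abs_le]
        exact ⟨by linarith [le_abs_self (z1 a), abs_nonneg (z2 a)],
          by linarith [neg_abs_le (z2 a), abs_nonneg (z1 a)]⟩
      linarith
    · rintro ⟨him, h1, h2⟩
      rw [him] at hb
      simp only [abs_zero, add_zero] at hb
      have : |z.re| ≤ |z1 a| + |z2 a| := by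
        rw [abs_le]
        exact ⟨by linarith [neg_abs_le (z2 a), abs_nonneg (z1 a)],
          by linarith [le_abs_self (z1 a), abs_nonneg (z2 a)]⟩
      linarith
  have hu : Tendsto (fun z : ℂ => z⁻¹) l (𝓝 0) := tendsto_inv₀_cobounded
  refine ⟨?_, ?_, ?_⟩
  -- ξ₁
  · have hδ : Tendsto (fun z : ℂ => ξ₁ z - z) l (𝓝 0) := hlim1
    have hW : Tendsto (fun z : ℂ => (1 + z⁻¹ * (ξ₁ z - z)) ^ 2 - (z⁻¹) ^ 2 * (a : ℂ) ^ 2) l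
        (𝓝 1) := by
      have := (((tendsto_const_nhds (x := (1 : ℂ))).add (hu.mul hδ)).pow 2).sub
        ((hu.pow 2).mul (tendsto_const_nhds (x := ((a : ℂ) ^ 2))))
      simpa using this
    have hWne : ∀ᶠ z in l, (1 + z⁻¹ * (ξ₁ z - z)) ^ 2 - (z⁻¹) ^ 2 * (a : ℂ) ^ 2 ≠ 0 :=
      hW.eventually_ne one_ne_zero
    have hWi : Tendsto (fun z : ℂ =>
        ((1 + z⁻¹ * (ξ₁ z - z)) ^ 2 - (z⁻¹) ^ 2 * (a : ℂ) ^ 2)⁻¹) l (𝓝 1) := by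
      simpa using hW.inv₀ one_ne_zero
    have hG : Tendsto (fun z : ℂ =>
        ((1 + z⁻¹ * (ξ₁ z - z)) ^ 2 - (z⁻¹) ^ 2 * (a : ℂ) ^ 2)⁻¹ *
          ((ξ₁ z - z) ^ 2 - (1 + z⁻¹ * (ξ₁ z - z)) *
            ((1 + z⁻¹ * (ξ₁ z - z)) ^ 2 - (z⁻¹) ^ 2 * (a : ℂ) ^ 2)⁻¹ - (a : ℂ) ^ 2)) l
        (𝓝 (1 * ((0 : ℂ) ^ 2 - (1 + 0 * 0) * 1 - (a : ℂ) ^ 2))) := by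
      exact hWi.mul (((hδ.pow 2).sub
        (((tendsto_const_nhds (x := (1 : ℂ))).add (hu.mul hδ)).mul hWi)).sub tendsto_const_nhds)
    refine tendsto_mul_pow_isBigO_inv_pow _ 3 _ (hG.congr' ?_)
    filter_upwards [hz0, hcut, hWne] with z hz hmem hWz
    have hΩ : z ∈ Omega1 a := by
      intro hc
      rcases hc with hc | hc
      exacts [hmem.1 hc, hmem.2 hc]
    have hC : (z - ξ₁ z) * ((ξ₁ z) ^ 2 - (a : ℂ) ^ 2) = ξ₁ z := by
      have h0 := hsol1 z hΩ
      unfold pasturCubic at h0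
      linear_combination -h0
    have hwa : (ξ₁ z) ^ 2 - (a : ℂ) ^ 2 ≠ 0 := by
      have hWeq : (ξ₁ z) ^ 2 - (a : ℂ) ^ 2
          = z ^ 2 * ((1 + z⁻¹ * (ξ₁ z - z)) ^ 2 - (z⁻¹) ^ 2 * (a : ℂ) ^ 2) := by
        field_simp
        ring
      rw [hWeq]
      exact mul_ne_zero (pow_ne_zero 2 hz) hWz
    exact (alg1 (a : ℂ) z (ξ₁ z) hC hz hwa).symm
  -- ξ₂
  · have hv : Tendsto (fun z : ℂ => 1 - z⁻¹ * ξ₂ z) l (𝓝 1) := by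
      have := (tendsto_const_nhds (x := (1 : ℂ))).sub (hu.mul hlim2)
      simpa using this
    have hvne : ∀ᶠ z in l, 1 - z⁻¹ * ξ₂ z ≠ 0 := hv.eventually_ne one_ne_zero
    have hA : Tendsto (fun z : ℂ => (1 - z⁻¹ * ξ₂ z)⁻¹) l (𝓝 1) := by
      simpa using hv.inv₀ one_ne_zero
    have hwa : Tendsto (fun z : ℂ => ξ₂ z + (a : ℂ)) l (𝓝 ((a : ℂ) + a)) :=
      hlim2.add tendsto_const_nhds
    have ha0 : ((a : ℂ) + a) ≠ 0 := by
      have h1 : ((a : ℂ) + a) = ((a + a : ℝ) : ℂ) := by push_cast; ring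
      rw [h1]
      exact Complex.ofReal_ne_zero.mpr (by linarith)
    have hwane : ∀ᶠ z in l, ξ₂ z + (a : ℂ) ≠ 0 := hwa.eventually_ne ha0
    have hden : (2 * ((a : ℂ) + a) ^ 2) ≠ 0 := by
      exact mul_ne_zero two_ne_zero (pow_ne_zero 2 ha0)
    have hF : Tendsto (fun z : ℂ =>
        ξ₂ z * (1 - z⁻¹ * ξ₂ z)⁻¹ * ((1 - z⁻¹ * ξ₂ z)⁻¹ + (ξ₂ z + (a : ℂ)) ^ 2) /
          (2 * (ξ₂ z + (a : ℂ)) ^ 2)) l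
        (𝓝 ((a : ℂ) * 1 * (1 + ((a : ℂ) + a) ^ 2) / (2 * ((a : ℂ) + a) ^ 2))) :=
      ((hlim2.mul hA).mul (hA.add (hwa.pow 2))).div
        (tendsto_const_nhds.mul (hwa.pow 2)) hden
    refine tendsto_mul_pow_isBigO_inv_pow _ 2 _ (hF.congr' ?_)
    filter_upwards [hz0, hcut, hvne, hwane] with z hz hmem hvz hwz
    have hΩ : z ∈ Omega2 a := hmem.2
    have hC : (z - ξ₂ z) * ((ξ₂ z) ^ 2 - (a : ℂ) ^ 2) = ξ₂ z := by
      have h0 := hsol2 z hΩ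
      unfold pasturCubic at h0
      linear_combination -h0
    have hzw : z - ξ₂ z ≠ 0 := by
      intro h0
      apply hvz
      have h1 : 1 - z⁻¹ * ξ₂ z = z⁻¹ * (z - ξ₂ z) := by
        field_simp
      rw [h1, h0, mul_zero]
    exact (alg2 (a : ℂ) z (ξ₂ z) hC hz hzw hwz).symm
  -- ξ₃
  · have hv : Tendsto (fun z : ℂ => 1 - z⁻¹ * ξ₃ z) l (𝓝 1) := by
      have := (tendsto_const_nhds (x := (1 : ℂ))).sub (hu.mul hlim3)
      simpa using this
    have hvne : ∀ᶠ z in l, 1 - z⁻¹ * ξ₃ z ≠ 0 := hv.eventually_ne one_ne_zero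
    have hA : Tendsto (fun z : ℂ => (1 - z⁻¹ * ξ₃ z)⁻¹) l (𝓝 1) := by
      simpa using hv.inv₀ one_ne_zero
    have hwa : Tendsto (fun z : ℂ => ξ₃ z - (a : ℂ)) l (𝓝 (-(a : ℂ) - a)) :=
      hlim3.sub tendsto_const_nhds
    have ha0 : (-(a : ℂ) - a) ≠ 0 := by
      have h1 : (-(a : ℂ) - a) = ((-(a + a) : ℝ) : ℂ) := by push_cast; ring
      rw [h1]
      exact Complex.ofReal_ne_zero.mpr (by linarith)
    have hwane : ∀ᶠ z in l, ξ₃ z - (a : ℂ) ≠ 0 := hwa.eventually_ne ha0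
    have hden : (2 * (-(a : ℂ) - a) ^ 2) ≠ 0 :=
      mul_ne_zero two_ne_zero (pow_ne_zero 2 ha0)
    have hF : Tendsto (fun z : ℂ =>
        ξ₃ z * (1 - z⁻¹ * ξ₃ z)⁻¹ * ((1 - z⁻¹ * ξ₃ z)⁻¹ + (ξ₃ z - (a : ℂ)) ^ 2) /
          (2 * (ξ₃ z - (a : ℂ)) ^ 2)) l
        (𝓝 (-(a : ℂ) * 1 * (1 + (-(a : ℂ) - a) ^ 2) / (2 * (-(a : ℂ) - a) ^ 2))) :=
      ((hlim3.mul hA).mul (hA.add (hwa.pow 2))).div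
        (tendsto_const_nhds.mul (hwa.pow 2)) hden
    refine tendsto_mul_pow_isBigO_inv_pow _ 2 _ (hF.congr' ?_)
    filter_upwards [hz0, hcut, hvne, hwane] with z hz hmem hvz hwz
    have hΩ : z ∈ Omega3 a := hmem.1
    have hC : (z - ξ₃ z) * ((ξ₃ z) ^ 2 - (a : ℂ) ^ 2) = ξ₃ z := by
      have h0 := hsol3 z hΩ
      unfold pasturCubic at h0
      linear_combination -h0
    have hzw : z - ξ₃ z ≠ 0 := by
      intro h0
      apply hvz
      have h1 : 1 - z⁻¹ * ξ₃ z = z⁻¹ * (z - ξ₃ z) := by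
        field_simp
      rw [h1, h0, mul_zero]
    exact (alg3 (a : ℂ) z (ξ₃ z) hC hz hzw hwz).symm
  -- done

end
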